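/- arXiv:1507.04278 — 2 statements merged into one kernel-verified Lean document; each statement's English description precedes it below -/
import Mathlib

section
/- Let 𝓕 be a saturated fusion system on a finite p-group P and Q an 𝓕-nilcentralized subgroup that is fully centralized in 𝓕. Then the kernel of the natural restriction homomorphism from the stabilizer Aut_𝓕(Q·C_P(Q))_Q of Q in Aut_𝓕(Q·C_P(Q)) to Aut_𝓕(Q) is a p-group. -/
open Subgroup

namespace FS

variable {P : Type*} [Group P]

/-- The morphism of subgroups induced by conjugation. -/
def conjHom (Q R : Subgroup P) (x : P) (h : ∀ r ∈ R, x * r * x⁻¹ ∈ Q) :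
    ↥R →* ↥Q where
  toFun r := ⟨x * (r : P) * x⁻¹, h r r.2⟩
  map_one' := by ext; simp
  map_mul' a b := by ext; push_cast; group

/-- The image in the ambient group of a subgroup under a morphism between subgroups. -/
def imgIn {Q R : Subgroup P} (φ : ↥R →* ↥Q) (S : Subgroup P) : Subgroup P :=
  ((S.subgroupOf R).map φ).map Q.subtype

/-- A Frobenius P-category (fusion system) on a finite p-group P, recorded by its
sets of morphisms: for subgroups Q, R of P, the set Hom Q R consists of the
injective group homomorphisms R → Q belonging to the category.  It contains all
morphisms induced by conjugation in P, is closed under composition and under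
taking inverses of isomorphisms, and satisfies the divisibility axiom. -/
structure FrobeniusCategory (P : Type*) [Group P] where
  Hom : ∀ _Q _R : Subgroup P, Set (↥_R →* ↥_Q)
  inj : ∀ {Q R : Subgroup P} {φ : ↥R →* ↥Q}, φ ∈ Hom Q R → Function.Injective φ
  conj_mem : ∀ (Q R : Subgroup P) (x : P) (h : ∀ r ∈ R, x * r * x⁻¹ ∈ Q),
    conjHom Q R x h ∈ Hom Q R
  comp_mem : ∀ {Q R T : Subgroup P} {φ : ↥R →* ↥Q} {ψ : ↥T →* ↥R},
    φ ∈ Hom Q R → ψ ∈ Hom R T → φ.comp ψ ∈ Hom Q T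
  inv_mem : ∀ {Q : Subgroup P} (e : ↥Q ≃* ↥Q),
    e.toMonoidHom ∈ Hom Q Q → e.symm.toMonoidHom ∈ Hom Q Q
  divisibility : ∀ {Q R T : Subgroup P} {φ : ↥R →* ↥Q} (ψ : ↥T →* ↥R),
    φ ∈ Hom Q R → φ.comp ψ ∈ Hom Q T → ψ ∈ Hom R T

/-- Restriction of a morphism between subgroups to smaller subgroups. -/
def restrict {Q Q' R R' : Subgroup P} (hR : R ≤ Q) (hR' : R' ≤ Q')
    (θ : ↥Q →* ↥Q')
    (hθ : ∀ x : ↥R, ((θ (Subgroup.inclusion hR x) : ↥Q') : P) ∈ R') : ↥R →* ↥R' :=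
  (Subgroup.subgroupOfEquivOfLe hR').toMonoidHom.comp
    ((θ.comp (Subgroup.inclusion hR)).codRestrict (R'.subgroupOf Q')
      fun x => by simpa [Subgroup.mem_subgroupOf] using hθ x)

/-- Q is fully centralized in F: every F-morphism defined on Q·C_P(Q) maps the
centralizer of Q onto the centralizer of the image of Q. -/
def FullyCentralized (F : FrobeniusCategory P) (Q : Subgroup P) : Prop :=
  ∀ φ ∈ F.Hom (⊤ : Subgroup P) (Q ⊔ centralizer (Q : Set P)),
    imgIn φ (centralizer (Q : Set P)) = centralizer ((imgIn φ Q : Subgroup P) : Set P)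

/-- Q is fully normalized in F: its normalizer has maximal order in the
F-isomorphism class of Q. -/
def FullyNormalized (F : FrobeniusCategory P) (Q : Subgroup P) : Prop :=
  ∀ φ ∈ F.Hom (⊤ : Subgroup P) Q,
    Nat.card ↥(normalizer ((imgIn φ Q : Subgroup P) : Set P)) ≤ Nat.card ↥(normalizer (Q : Set P))

/-- Q and Q' are F-isomorphic: there is an F-morphism Q → Q' with image Q'. -/
def FIso (F : FrobeniusCategory P) (Q Q' : Subgroup P) : Prop :=
  ∃ φ ∈ F.Hom Q' Q, imgIn φ Q = Q'

/-- Saturation: the Sylow axiom (inner automorphisms form a Sylow p-subgroup of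
the F-automorphisms of P) and Puig's extension axiom. -/
structure IsSaturated (p : ℕ) (F : FrobeniusCategory P) : Prop where
  sylow : ∃ m : ℕ, Nat.card ↥(F.Hom (⊤ : Subgroup P) (⊤ : Subgroup P)) =
      Nat.card ↥{φ : ↥(⊤ : Subgroup P) →* ↥(⊤ : Subgroup P) |
        φ ∈ F.Hom ⊤ ⊤ ∧ ∃ x : P, ∀ r : ↥(⊤ : Subgroup P), ((φ r : ↥(⊤ : Subgroup P)) : P) = x * r * x⁻¹} * m ∧
      ¬ p ∣ m
  extension : ∀ Q : Subgroup P, FullyCentralized F Q →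
    ∀ φ ∈ F.Hom (⊤ : Subgroup P) Q, ∀ R : Subgroup P,
    imgIn φ Q ≤ R → R ≤ normalizer ((imgIn φ Q : Subgroup P) : Set P) →
    (∀ r ∈ R, ∃ x : P, ∃ hx : ∀ u ∈ Q, x * u * x⁻¹ ∈ Q,
      ∀ u : ↥Q, ((φ ⟨x * (u : P) * x⁻¹, hx u u.2⟩ : ↥(⊤ : Subgroup P)) : P) =
        r * ((φ u : ↥(⊤ : Subgroup P)) : P) * r⁻¹) →
    ∃ ζ ∈ F.Hom (⊤ : Subgroup P) R,
      ∀ (u : ↥Q) (hu : ((φ u : ↥(⊤ : Subgroup P)) : P) ∈ R),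
        ((ζ ⟨((φ u : ↥(⊤ : Subgroup P)) : P), hu⟩ : ↥(⊤ : Subgroup P)) : P) = u

/-- Q is F-selfcentralizing: the image of Q under any F-morphism to P contains
its own centralizer. -/
def SelfCentralizing (F : FrobeniusCategory P) (Q : Subgroup P) : Prop :=
  ∀ φ ∈ F.Hom (⊤ : Subgroup P) Q,
    centralizer ((imgIn φ Q : Subgroup P) : Set P) ≤ imgIn φ Q

/-- The centralizer subsystem of V in F is the trivial system on C_P(V): every
F-morphism between subgroups of C_P(V) which extends to a morphism fixing V
pointwise is induced by conjugation by an element of C_P(V). -/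
def CentralizerTrivial (F : FrobeniusCategory P) (V : Subgroup P) : Prop :=
  ∀ A B : Subgroup P, A ≤ centralizer (V : Set P) → B ≤ centralizer (V : Set P) →
    ∀ φ ∈ F.Hom A B,
      (∃ ψ ∈ F.Hom (A ⊔ V) (B ⊔ V),
        (∀ x : ↥B, ψ (Subgroup.inclusion le_sup_left x) =
          Subgroup.inclusion le_sup_left (φ x)) ∧
        (∀ x : ↥(B ⊔ V), (x : P) ∈ V → ((ψ x : ↥(A ⊔ V)) : P) = (x : P))) →
      ∃ c ∈ centralizer (V : Set P), ∀ b : ↥B, ((φ b : ↥A) : P) = c * (b : P) * c⁻¹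

/-- Q is F-nilcentralized: for every F-morphism to P with fully centralized
image, the centralizer subsystem of the image is trivial. -/
def Nilcentralized (F : FrobeniusCategory P) (Q : Subgroup P) : Prop :=
  ∀ φ ∈ F.Hom (⊤ : Subgroup P) Q,
    FullyCentralized F (imgIn φ Q) → CentralizerTrivial F (imgIn φ Q)

end FS

open FS Subgroup in
/-- for a nilcentralized, fully centralized subgroup Q, the kernel
of the restriction homomorphism from the stabilizer of Q in Aut_F(Q·C_P(Q)) to
Aut_F(Q) is a p-group: every F-automorphism of Q·C_P(Q) stabilizing Q and
restricting to the identity on Q has p-power order. -/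
theorem statement13 {p : ℕ} [Fact p.Prime] {P : Type*} [Group P] [Fintype P]
    (hP : IsPGroup p P) (F : FS.FrobeniusCategory P) (hsat : FS.IsSaturated p F)
    (Q : Subgroup P) (hnil : FS.Nilcentralized F Q) (hfc : FS.FullyCentralized F Q) :
    ∀ c : ↥(Q ⊔ centralizer (Q : Set P)) →* ↥(Q ⊔ centralizer (Q : Set P)),
      c ∈ F.Hom (Q ⊔ centralizer (Q : Set P)) (Q ⊔ centralizer (Q : Set P)) →
      Function.Surjective c →
      (∀ x : ↥(Q ⊔ centralizer (Q : Set P)), (x : P) ∈ Q → ((c x : ↥(Q ⊔ centralizer (Q : Set P))) : P) ∈ Q) →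
      (∀ x : ↥(Q ⊔ centralizer (Q : Set P)), (x : P) ∈ Q → c x = x) →
      ∃ n : ℕ, ∀ x, (⇑c)^[p ^ n] x = x := by
  intro c hc hsurj hstab hfix
  classical
  -- Notation (not `set`, to avoid mangling hypotheses)
  -- C := centralizer (Q : Set P), N := Q ⊔ C
  -- Step 1: CentralizerTrivial F Q from hnil applied to inclusion Q → ⊤
  have hQtop : ∀ r ∈ Q, (1:P) * r * (1:P)⁻¹ ∈ (⊤ : Subgroup P) := fun r _ => mem_top _
  have hιmem : conjHom ⊤ Q 1 hQtop ∈ F.Hom ⊤ Q := F.conj_mem ⊤ Q 1 hQtop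
  have himg : imgIn (conjHom ⊤ Q 1 hQtop) Q = Q := by
    ext x
    simp only [imgIn, Subgroup.mem_map, Subgroup.mem_subgroupOf]
    constructor
    · rintro ⟨y, ⟨z, hz, rfl⟩, rfl⟩
      simpa [conjHom] using z.2
    · intro hx
      exact ⟨conjHom ⊤ Q 1 hQtop ⟨x, hx⟩, ⟨⟨x, hx⟩, hx, rfl⟩, by simp [conjHom]⟩
  have hCT : CentralizerTrivial F Q := by
    have := hnil (conjHom ⊤ Q 1 hQtop) hιmem (by rw [himg]; exact hfc)
    rwa [himg] at this
  -- c fixes Q pointwise (coerced form)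
  have hfixP : ∀ (x : P) (hx : x ∈ Q) (hx' : x ∈ Q ⊔ centralizer (Q : Set P)),
      ((c ⟨x, hx'⟩ : ↥(Q ⊔ centralizer (Q : Set P))) : P) = x := by
    intro x hx hx'
    rw [hfix ⟨x, hx'⟩ hx]
  -- c maps C into C
  have hCtoC : ∀ z : ↥(centralizer (Q : Set P)),
      ((c ⟨(z : P), mem_sup_right z.2⟩ : ↥(Q ⊔ centralizer (Q : Set P))) : P)
        ∈ centralizer (Q : Set P) := by
    intro z
    rw [Subgroup.mem_centralizer_iff]
    intro q hq
    have hqN : q ∈ Q ⊔ centralizer (Q : Set P) := mem_sup_left hq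
    have hcomm : (⟨q, hqN⟩ : ↥(Q ⊔ centralizer (Q : Set P))) * ⟨(z : P), mem_sup_right z.2⟩
        = ⟨(z : P), mem_sup_right z.2⟩ * ⟨q, hqN⟩ := by
      ext
      exact (Subgroup.mem_centralizer_iff.mp z.2 q hq)
    calc q * ((c ⟨(z : P), mem_sup_right z.2⟩ : ↥(Q ⊔ centralizer (Q : Set P))) : P)
        = ((c ⟨q, hqN⟩ : ↥(Q ⊔ centralizer (Q : Set P))) : P) *
            ((c ⟨(z : P), mem_sup_right z.2⟩ : ↥(Q ⊔ centralizer (Q : Set P))) : P) := by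
          rw [hfixP q hq hqN]
      _ = ((c (⟨q, hqN⟩ * ⟨(z : P), mem_sup_right z.2⟩) : ↥(Q ⊔ centralizer (Q : Set P))) : P) := by
          rw [map_mul]; rfl
      _ = ((c (⟨(z : P), mem_sup_right z.2⟩ * ⟨q, hqN⟩) : ↥(Q ⊔ centralizer (Q : Set P))) : P) := by
          rw [hcomm]
      _ = ((c ⟨(z : P), mem_sup_right z.2⟩ : ↥(Q ⊔ centralizer (Q : Set P))) : P) * q := by
          rw [map_mul]
          push_cast
          rw [hfixP q hq hqN]
  -- the restriction of c to C
  let φC : ↥(centralizer (Q : Set P)) →* ↥(centralizer (Q : Set P)) :=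
    { toFun := fun z => ⟨((c ⟨(z : P), mem_sup_right z.2⟩ : ↥(Q ⊔ centralizer (Q : Set P))) : P),
        hCtoC z⟩
      map_one' := by
        ext
        show ((c ⟨(1:P), _⟩ : ↥(Q ⊔ centralizer (Q : Set P))) : P) = 1
        have h1 : (⟨(1:P), mem_sup_right (one_mem _)⟩ : ↥(Q ⊔ centralizer (Q : Set P))) = 1 := rfl
        rw [h1, map_one]; rfl
      map_mul' := by
        intro a b
        ext
        show ((c ⟨(a : P) * (b : P), _⟩ : ↥(Q ⊔ centralizer (Q : Set P))) : P) = _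
        have h1 : (⟨(a : P) * (b : P), mem_sup_right (mul_mem a.2 b.2)⟩ :
            ↥(Q ⊔ centralizer (Q : Set P)))
            = ⟨(a : P), mem_sup_right a.2⟩ * ⟨(b : P), mem_sup_right b.2⟩ := rfl
        rw [h1, map_mul]; rfl }
  have hφCval : ∀ z : ↥(centralizer (Q : Set P)),
      ((φC z : ↥(centralizer (Q : Set P))) : P)
        = ((c ⟨(z : P), mem_sup_right z.2⟩ : ↥(Q ⊔ centralizer (Q : Set P))) : P) := fun z => rfl
  -- φC is an F-morphism via divisibility
  have hCN : ∀ r ∈ centralizer (Q : Set P), (1:P) * r * (1:P)⁻¹ ∈ Q ⊔ centralizer (Q : Set P) := by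
    intro r hr; simpa using mem_sup_right (S := Q) hr
  have hinclmem : conjHom (Q ⊔ centralizer (Q : Set P)) (centralizer (Q : Set P)) 1 hCN
      ∈ F.Hom (Q ⊔ centralizer (Q : Set P)) (centralizer (Q : Set P)) :=
    F.conj_mem _ _ 1 hCN
  have hcompeq : (conjHom (Q ⊔ centralizer (Q : Set P)) (centralizer (Q : Set P)) 1 hCN).comp φC
      = c.comp (conjHom (Q ⊔ centralizer (Q : Set P)) (centralizer (Q : Set P)) 1 hCN) := by
    ext z
    show (1:P) * ((c ⟨(z : P), mem_sup_right z.2⟩ : ↥(Q ⊔ centralizer (Q : Set P))) : P) * (1:P)⁻¹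
        = ((c (conjHom (Q ⊔ centralizer (Q : Set P)) (centralizer (Q : Set P)) 1 hCN z) :
            ↥(Q ⊔ centralizer (Q : Set P))) : P)
    have h1 : conjHom (Q ⊔ centralizer (Q : Set P)) (centralizer (Q : Set P)) 1 hCN z
        = ⟨(z : P), mem_sup_right z.2⟩ := by
      ext; show (1:P) * (z : P) * (1:P)⁻¹ = (z : P); group
    rw [h1]; group
  have hφCmem : φC ∈ F.Hom (centralizer (Q : Set P)) (centralizer (Q : Set P)) := by
    apply F.divisibility φC hinclmem
    rw [hcompeq]
    exact F.comp_mem hc hinclmem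
  -- build the extension ψ of φC to C ⊔ Q (which equals Q ⊔ C)
  have hj : ∀ r ∈ (centralizer (Q : Set P) ⊔ Q), (1:P) * r * (1:P)⁻¹ ∈ Q ⊔ centralizer (Q : Set P) := by
    intro r hr
    simpa using (sup_comm (centralizer (Q : Set P)) Q ▸ hr)
  have hi : ∀ r ∈ (Q ⊔ centralizer (Q : Set P)), (1:P) * r * (1:P)⁻¹ ∈ centralizer (Q : Set P) ⊔ Q := by
    intro r hr
    simpa using (sup_comm Q (centralizer (Q : Set P)) ▸ hr)
  let j : ↥(centralizer (Q : Set P) ⊔ Q) →* ↥(Q ⊔ centralizer (Q : Set P)) :=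
    conjHom _ _ 1 hj
  let i : ↥(Q ⊔ centralizer (Q : Set P)) →* ↥(centralizer (Q : Set P) ⊔ Q) :=
    conjHom _ _ 1 hi
  let ψ : ↥(centralizer (Q : Set P) ⊔ Q) →* ↥(centralizer (Q : Set P) ⊔ Q) :=
    i.comp (c.comp j)
  have hψmem : ψ ∈ F.Hom (centralizer (Q : Set P) ⊔ Q) (centralizer (Q : Set P) ⊔ Q) :=
    F.comp_mem (F.conj_mem _ _ 1 hi) (F.comp_mem hc (F.conj_mem _ _ 1 hj))
  have hjval : ∀ y : ↥(centralizer (Q : Set P) ⊔ Q),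
      j y = ⟨(y : P), sup_comm (centralizer (Q : Set P)) Q ▸ y.2⟩ := by
    intro y; ext; show (1:P) * (y : P) * (1:P)⁻¹ = (y : P); group
  have hψval : ∀ y : ↥(centralizer (Q : Set P) ⊔ Q),
      ((ψ y : ↥(centralizer (Q : Set P) ⊔ Q)) : P)
        = ((c ⟨(y : P), sup_comm (centralizer (Q : Set P)) Q ▸ y.2⟩ :
            ↥(Q ⊔ centralizer (Q : Set P))) : P) := by
    intro y
    show (1:P) * ((c (j y) : ↥(Q ⊔ centralizer (Q : Set P))) : P) * (1:P)⁻¹ = _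
    rw [hjval y]; group
  -- apply CentralizerTrivial
  obtain ⟨c₀, hc₀C, hc₀⟩ :
      ∃ c₀ ∈ centralizer (Q : Set P), ∀ b : ↥(centralizer (Q : Set P)),
        ((φC b : ↥(centralizer (Q : Set P))) : P) = c₀ * (b : P) * c₀⁻¹ := by
    apply hCT (centralizer (Q : Set P)) (centralizer (Q : Set P)) le_rfl le_rfl φC hφCmem
    refine ⟨ψ, hψmem, ?_, ?_⟩
    · intro x
      ext
      rw [hψval]
      rfl
    · intro x hx
      rw [hψval]
      exact hfixP (x : P) hx _
  -- c is conjugation by c₀ on all of N = Q ⊔ C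
  have key : ∀ x : ↥(Q ⊔ centralizer (Q : Set P)),
      ((c x : ↥(Q ⊔ centralizer (Q : Set P))) : P) = c₀ * (x : P) * c₀⁻¹ := by
    let f : ↥(Q ⊔ centralizer (Q : Set P)) →* P :=
      (MulAut.conj c₀).toMonoidHom.comp (Q ⊔ centralizer (Q : Set P)).subtype
    let g : ↥(Q ⊔ centralizer (Q : Set P)) →* P :=
      (Q ⊔ centralizer (Q : Set P)).subtype.comp c
    have hQle : Q ≤ (f.eqLocus g).map (Q ⊔ centralizer (Q : Set P)).subtype := by
      intro q hq
      refine ⟨⟨q, mem_sup_left hq⟩, ?_, rfl⟩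
      show f _ = g _
      have h1 : f ⟨q, mem_sup_left hq⟩ = c₀ * q * c₀⁻¹ := rfl
      have h2 : g ⟨q, mem_sup_left hq⟩ = q := hfixP q hq _
      rw [h1, h2, mul_inv_eq_iff_eq_mul]
      exact (Subgroup.mem_centralizer_iff.mp hc₀C q hq).symm
    have hCle : centralizer (Q : Set P) ≤
        (f.eqLocus g).map (Q ⊔ centralizer (Q : Set P)).subtype := by
      intro z hz
      refine ⟨⟨z, mem_sup_right hz⟩, ?_, rfl⟩
      show f _ = g _
      have h1 : f ⟨z, mem_sup_right hz⟩ = c₀ * z * c₀⁻¹ := rfl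
      have h2 : g ⟨z, mem_sup_right hz⟩
          = ((c ⟨z, mem_sup_right hz⟩ : ↥(Q ⊔ centralizer (Q : Set P))) : P) := rfl
      rw [h1, h2, ← hc₀ ⟨z, hz⟩]
      rfl
    have hNle : Q ⊔ centralizer (Q : Set P) ≤
        (f.eqLocus g).map (Q ⊔ centralizer (Q : Set P)).subtype := sup_le hQle hCle
    intro x
    obtain ⟨y, hy, hyx⟩ := hNle x.2
    have hyx' : y = x := Subtype.ext hyx
    subst hyx'
    have hfg : f y = g y := hy
    have h1 : f y = c₀ * (y : P) * c₀⁻¹ := rfl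
    have h2 : g y = ((c y : ↥(Q ⊔ centralizer (Q : Set P))) : P) := rfl
    rw [h1, h2] at hfg
    exact hfg.symm
  -- c₀ has p-power order, hence so does c
  obtain ⟨k, hk⟩ := hP c₀
  refine ⟨k, fun x => ?_⟩
  have iter : ∀ (m : ℕ) (x : ↥(Q ⊔ centralizer (Q : Set P))),
      (((⇑c)^[m] x : ↥(Q ⊔ centralizer (Q : Set P))) : P) = c₀ ^ m * (x : P) * (c₀ ^ m)⁻¹ := by
    intro m
    induction m with
    | zero => intro x; simp
    | succ m ih =>
      intro x
      rw [Function.iterate_succ_apply', key, ih, pow_succ]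
      group
  have hiter := iter (p ^ k) x
  rw [hk] at hiter
  ext
  simpa using hiter
end

section
/- Uniqueness via length induction (Lemma 3.5, abstract form): let Z be an abelian group, 𝔇 a regular central Z-extension of a category 𝔆 whose objects include a terminal-like object P such that every 𝔆-morphism factors through chosen inclusion morphisms ι_Q : Q → P, and let F : 𝔇 → 𝔇 be a functor lifting the identity of 𝔆, commuting with the Z-action, fixing a chosen lift ι̂_Q of ι_Q for each object Q, and acting as the identity on every automorphism group Aut_𝔇(Q). If in addition every morphism of 𝔆 from Q to P can be written as a finite alternating composition of (restrictions of) the ι's and automorphisms (a 'length' decomposition), and morphisms ι̂_R ∘ f = ι̂_R ∘ g imply f = g (monomorphism property), then F is the identity functor. -/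
universe u v

structure RawCat (Obj : Type u) where
  Hom : Obj → Obj → Type v
  id : ∀ A : Obj, Hom A A
  comp : ∀ {A B C : Obj}, Hom A B → Hom B C → Hom A C
  id_comp : ∀ {A B : Obj} (f : Hom A B), comp (id A) f = f
  comp_id : ∀ {A B : Obj} (f : Hom A B), comp f (id B) = f
  assoc : ∀ {A B C D : Obj} (f : Hom A B) (g : Hom B C) (h : Hom C D),
    comp (comp f g) h = comp f (comp g h)

/-- A regular central `Z`-extension of a category `C`: a category `D` with the same
objects, a full functor `π : D → C` which is the identity on objects, and a free and
transitive (regular) action of `Z` on each fiber of `D.Hom A B → C.Hom A B`,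
compatible with composition on both sides. -/
structure RegExt (Z : Type*) [CommGroup Z] {Obj : Type u} (C D : RawCat Obj) where
  π : ∀ {A B : Obj}, D.Hom A B → C.Hom A B
  π_id : ∀ A : Obj, π (D.id A) = C.id A
  π_comp : ∀ {A B E : Obj} (f : D.Hom A B) (g : D.Hom B E),
    π (D.comp f g) = C.comp (π f) (π g)
  full : ∀ {A B : Obj} (f : C.Hom A B), ∃ g : D.Hom A B, π g = f
  smul : ∀ {A B : Obj}, Z → D.Hom A B → D.Hom A B
  π_smul : ∀ {A B : Obj} (z : Z) (f : D.Hom A B), π (smul z f) = π f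
  one_smul : ∀ {A B : Obj} (f : D.Hom A B), smul 1 f = f
  mul_smul : ∀ {A B : Obj} (z w : Z) (f : D.Hom A B), smul (z * w) f = smul z (smul w f)
  free : ∀ {A B : Obj} (z : Z) (f : D.Hom A B), smul z f = f → z = 1
  transitive : ∀ {A B : Obj} (f g : D.Hom A B), π f = π g → ∃ z : Z, smul z f = g
  smul_comp : ∀ {A B E : Obj} (z : Z) (f : D.Hom A B) (g : D.Hom B E),
    D.comp (smul z f) g = smul z (D.comp f g)
  comp_smul : ∀ {A B E : Obj} (z : Z) (f : D.Hom A B) (g : D.Hom B E),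
    D.comp f (smul z g) = smul z (D.comp f g)


/-- abstract form of Lemma 3.5: a Z-functor of a regular central
Z-extension lifting the identity, fixing the chosen lifted inclusions and acting as
the identity on all automorphism groups, is the identity, given the length
decomposition of morphisms to the distinguished object and the monomorphism
property of the lifted inclusions. -/
theorem statement14 {Z : Type*} [CommGroup Z] {Obj : Type u} (C D : RawCat Obj)
    (E : RegExt Z C D) (Pt : Obj)
    (iota : ∀ Q : Obj, C.Hom Q Pt) (iotaHat : ∀ Q : Obj, D.Hom Q Pt)
    (hiota : ∀ Q : Obj, E.π (iotaHat Q) = iota Q)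
    (FH : ∀ {A B : Obj}, D.Hom A B → D.Hom A B)
    (hFid : ∀ A : Obj, FH (D.id A) = D.id A)
    (hFcomp : ∀ {A B X : Obj} (f : D.Hom A B) (g : D.Hom B X),
      FH (D.comp f g) = D.comp (FH f) (FH g))
    (hFlift : ∀ {A B : Obj} (f : D.Hom A B), E.π (FH f) = E.π f)
    (hFZ : ∀ {A B : Obj} (z : Z) (f : D.Hom A B), FH (E.smul z f) = E.smul z (FH f))
    (hFiota : ∀ Q : Obj, FH (iotaHat Q) = iotaHat Q)
    (hFaut : ∀ (Q : Obj) (f : D.Hom Q Q),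
      (∃ g, D.comp f g = D.id Q ∧ D.comp g f = D.id Q) → FH f = f)
    (len : ∀ Q : Obj, C.Hom Q Pt → ℕ)
    (hlen0 : ∀ (Q : Obj) (φ : C.Hom Q Pt), len Q φ = 0 →
      ∃ σ : C.Hom Pt Pt, (∃ τ, C.comp σ τ = C.id Pt ∧ C.comp τ σ = C.id Pt) ∧
        φ = C.comp (iota Q) σ)
    (hlenS : ∀ (Q : Obj) (φ : C.Hom Q Pt), len Q φ ≠ 0 →
      ∃ (R : Obj) (η : C.Hom Q R) (τ : C.Hom R R),
        (∃ τ', C.comp τ τ' = C.id R ∧ C.comp τ' τ = C.id R) ∧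
        φ = C.comp η (C.comp τ (iota R)) ∧ len Q (C.comp η (iota R)) < len Q φ)
    (hmono : ∀ {Q R : Obj} (f g : D.Hom Q R),
      D.comp f (iotaHat R) = D.comp g (iotaHat R) → f = g) :
    ∀ {A B : Obj} (f : D.Hom A B), FH f = f := by
  -- lifted invertibles are invertible in D
  have autlift : ∀ (R : Obj) (τ : C.Hom R R),
      (∃ τ', C.comp τ τ' = C.id R ∧ C.comp τ' τ = C.id R) →
      ∀ (t : D.Hom R R), E.π t = τ →
      ∃ g, D.comp t g = D.id R ∧ D.comp g t = D.id R := by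
    rintro R τ ⟨τ', h1, h2⟩ t ht
    obtain ⟨t', ht'⟩ := E.full τ'
    have p1 : E.π (D.id R) = E.π (D.comp t t') := by
      rw [E.π_comp, ht, ht', h1, E.π_id]
    have p2 : E.π (D.id R) = E.π (D.comp t' t) := by
      rw [E.π_comp, ht, ht', h2, E.π_id]
    obtain ⟨w, hw⟩ := E.transitive (D.id R) (D.comp t t') p1
    obtain ⟨w', hw'⟩ := E.transitive (D.id R) (D.comp t' t) p2
    have a1 : D.comp (D.comp t t') t = E.smul w t := by
      rw [← hw, E.smul_comp, D.id_comp]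
    have a2 : D.comp t (D.comp t' t) = E.smul w' t := by
      rw [← hw', E.comp_smul, D.comp_id]
    have e1 : E.smul w t = E.smul w' t := by rw [← a1, ← a2, D.assoc]
    have hww' : w' = w := inv_mul_eq_one.mp (E.free (w'⁻¹ * w) t (by
      rw [E.mul_smul, e1, ← E.mul_smul, inv_mul_cancel, E.one_smul]))
    refine ⟨E.smul w⁻¹ t', ?_, ?_⟩
    · rw [E.comp_smul, ← hw, ← E.mul_smul, inv_mul_cancel, E.one_smul]
    · rw [E.smul_comp, ← hw', hww', ← E.mul_smul, inv_mul_cancel, E.one_smul]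
  -- key: FH fixes all morphisms into Pt, by strong induction on length
  have key : ∀ (n : ℕ) (Q : Obj) (f : D.Hom Q Pt), len Q (E.π f) = n → FH f = f := by
    intro n
    induction n using Nat.strong_induction_on with
    | _ n ih =>
      intro Q f hn
      by_cases h0 : len Q (E.π f) = 0
      · obtain ⟨σ, hσinv, hφ⟩ := hlen0 Q (E.π f) h0
        obtain ⟨s, hs⟩ := E.full σ
        have hπ : E.π (D.comp (iotaHat Q) s) = E.π f := by
          rw [E.π_comp, hiota, hs, ← hφ]
        obtain ⟨z, hz⟩ := E.transitive _ _ hπ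
        have hFs : FH s = s := hFaut Pt s (autlift Pt σ hσinv s hs)
        rw [← hz, hFZ, hFcomp, hFiota, hFs]
      · obtain ⟨R, η, τ, hτinv, hφ, hlt⟩ := hlenS Q (E.π f) h0
        obtain ⟨e, he⟩ := E.full η
        obtain ⟨t, ht⟩ := E.full τ
        have hFt : FH t = t := hFaut R t (autlift R τ hτinv t ht)
        have hlen' : len Q (E.π (D.comp e (iotaHat R))) < n := by
          rw [E.π_comp, he, hiota, ← hn]; exact hlt
        have hIH : FH (D.comp e (iotaHat R)) = D.comp e (iotaHat R) :=
          ih _ hlen' Q _ rfl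
        have hFe : FH e = e := by
          apply hmono
          rw [← hFiota R, ← hFcomp, hIH, hFiota]
        have hπ : E.π (D.comp e (D.comp t (iotaHat R))) = E.π f := by
          rw [E.π_comp, E.π_comp, he, ht, hiota, ← hφ]
        obtain ⟨z, hz⟩ := E.transitive _ _ hπ
        rw [← hz, hFZ, hFcomp, hFcomp, hFe, hFt, hFiota]
  -- conclude for arbitrary morphisms via composition with iotaHat and mono
  intro A B f
  apply hmono
  have h := key _ A (D.comp f (iotaHat B)) rfl
  rw [hFcomp, hFiota] at h
  exact h
end
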